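/- Let V be continuous and piecewise C¹ on a bounded interval [a,b], ρ = e^{−V}, and suppose f_λ, g_λ form a basis of solutions of the equation u'' − V'u' = −λu. Then the Neumann spectral gap of the measure ρ(t)dt/Z on [a,b] is the first positive zero of the function d(λ) = f_λ'(a)·g_λ'(b) − f_λ'(b)·g_λ'(a). Moreover, if V is even and a = −b, the spectral gap is the first positive zero of λ ↦ g_λ'(b), where g_λ is the odd solution. -/

import Mathlib

open MeasureTheory Real Set

/-- Variance of `f` under `μ`, as `inf_a ∫ (f-a)^2 dμ`. -/
noncomputable def Var (μ : Measure ℝ) (f : ℝ → ℝ) : ℝ := ⨅ a : ℝ, ∫ x, (f x - a)^2 ∂μ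

/-- `μ` satisfies a Poincaré inequality with constant `C`, over test functions that are
differentiable on the supporting interval `s` with `f, f' ∈ L²(μ)`. -/
def PoincareOn (μ : Measure ℝ) (s : Set ℝ) (C : ℝ) : Prop :=
  ∀ f f' : ℝ → ℝ, (∀ x ∈ s, HasDerivAt f (f' x) x) →
    Integrable (fun x => (f x)^2) μ → Integrable (fun x => (f' x)^2) μ →
    Var μ f ≤ C * ∫ x, (f' x)^2 ∂μ

/-- The optimal Poincaré constant of `μ` on the interval `s`. -/
noncomputable def CP (μ : Measure ℝ) (s : Set ℝ) : ℝ := sInf {C | 0 ≤ C ∧ PoincareOn μ s C}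

/-- `(u, u')` solves `u'' - V'u' = -λu` on `[a,b]`. -/
def IsSol (V' : ℝ → ℝ) (a b lam : ℝ) (u u' : ℝ → ℝ) : Prop :=
  (∀ t ∈ Set.Icc a b, HasDerivAt u (u' t) t) ∧
  (∀ t ∈ Set.Icc a b, HasDerivAt u' (V' t * u' t - lam * u t) t)

/-- `lam` is a Neumann eigenvalue of `f'' - V'f' = -λf` on `[a,b]`. -/
def IsNeumannEig (V' : ℝ → ℝ) (a b lam : ℝ) : Prop :=
  ∃ u u' : ℝ → ℝ, IsSol V' a b lam u u' ∧ (∃ x ∈ Set.Icc a b, u x ≠ 0) ∧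
    u' a = 0 ∧ u' b = 0


open Filter Topology



lemma exp_sub_one_le_self_mul_exp (y : ℝ) : Real.exp y - 1 ≤ y * Real.exp y := by
  have h := Real.add_one_le_exp (-y)
  have hp := Real.exp_pos y
  have hmul : Real.exp (-y) * Real.exp y = 1 := by rw [← Real.exp_add]; simp
  nlinarith

lemma hasDerivAt_mom' {V V' p p' : ℝ → ℝ} {lam t : ℝ}
    (hV : HasDerivAt V (V' t) t)
    (hp' : HasDerivAt p' (V' t * p' t - lam * p t) t) :
    HasDerivAt (fun s => p' s * Real.exp (-V s)) (-lam * p t * Real.exp (-V t)) t := by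
  have h1 : HasDerivAt (fun s => Real.exp (-V s)) (Real.exp (-V t) * (-V' t)) t :=
    (hV.neg).exp
  have := hp'.mul h1
  refine this.congr_deriv ?_
  ring

/-- Main Grönwall comparison between two solutions with parameters lam1, lam2. -/
lemma gron_main {b K : ℝ} {V V' : ℝ → ℝ}
    (hVc : ContinuousOn V (Icc (-b) b))
    (hV' : ∀ t ∈ Ioo (-b) b, HasDerivAt V (V' t) t)
    (hK : ∀ t ∈ Icc (-b) b, |V t| ≤ K)
    {lam1 lam2 R δ : ℝ} {p p' q q' : ℝ → ℝ}
    (hp1 : ∀ t ∈ Icc (-b) b, HasDerivAt p (p' t) t)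
    (hp2 : ∀ t ∈ Ioo (-b) b, HasDerivAt p' (V' t * p' t - lam1 * p t) t)
    (hpc : ContinuousOn p' (Icc (-b) b))
    (hq1 : ∀ t ∈ Icc (-b) b, HasDerivAt q (q' t) t)
    (hq2 : ∀ t ∈ Ioo (-b) b, HasDerivAt q' (V' t * q' t - lam2 * q t) t)
    (hqc : ContinuousOn q' (Icc (-b) b))
    (hR : ∀ t ∈ Icc (-b) b, |q t| ≤ R)
    {t0 t1 : ℝ} (h0 : -b < t0) (h1 : t1 ≤ b) (h01 : t0 ≤ t1)
    (hδ : max |p t0 - q t0| |p' t0 * Real.exp (-V t0) - q' t0 * Real.exp (-V t0)| ≤ δ) :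
    ∀ t ∈ Icc t0 t1,
      max |p t - q t| |p' t * Real.exp (-V t) - q' t * Real.exp (-V t)|
        ≤ gronwallBound δ ((1 + |lam1|) * Real.exp K) (|lam1 - lam2| * (Real.exp K * R))
            (t - t0) := by
  have hsub : Icc t0 t1 ⊆ Icc (-b) b := fun x hx => ⟨le_of_lt (lt_of_lt_of_le h0 hx.1), hx.2.trans h1⟩
  have hsub' : Ico t0 t1 ⊆ Ioo (-b) b := fun x hx => ⟨lt_of_lt_of_le h0 hx.1, lt_of_lt_of_le hx.2 h1⟩
  set F : ℝ → ℝ × ℝ := fun t => (p t - q t, p' t * Real.exp (-V t) - q' t * Real.exp (-V t))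
    with hF
  set F' : ℝ → ℝ × ℝ := fun t =>
    (p' t - q' t, -lam1 * p t * Real.exp (-V t) - -lam2 * q t * Real.exp (-V t)) with hF'
  have hE : ContinuousOn (fun t => Real.exp (-V t)) (Icc (-b) b) :=
    Real.continuous_exp.comp_continuousOn hVc.neg
  have hpcont : ContinuousOn p (Icc (-b) b) :=
    fun x hx => ((hp1 x hx).continuousAt).continuousWithinAt
  have hqcont : ContinuousOn q (Icc (-b) b) :=
    fun x hx => ((hq1 x hx).continuousAt).continuousWithinAt
  have hFc : ContinuousOn F (Icc t0 t1) := by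
    apply ContinuousOn.prodMk
    · exact (hpcont.sub hqcont).mono hsub
    · exact (((hpc.mul hE).sub (hqc.mul hE))).mono hsub
  have hFd : ∀ t ∈ Ico t0 t1, HasDerivWithinAt F (F' t) (Ici t) t := by
    intro t ht
    have ht' := hsub' ht
    have h1 : HasDerivAt (fun s => p s - q s) (p' t - q' t) t :=
      (hp1 t (Ioo_subset_Icc_self ht')).sub (hq1 t (Ioo_subset_Icc_self ht'))
    have h2 : HasDerivAt (fun s => p' s * Real.exp (-V s) - q' s * Real.exp (-V s))
        (-lam1 * p t * Real.exp (-V t) - -lam2 * q t * Real.exp (-V t)) t :=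
      (hasDerivAt_mom' (hV' t ht') (hp2 t ht')).sub (hasDerivAt_mom' (hV' t ht') (hq2 t ht'))
    exact (h1.prodMk h2).hasDerivWithinAt
  have hEb : ∀ t ∈ Icc (-b) b, Real.exp (-V t) ≤ Real.exp K := by
    intro t ht
    exact Real.exp_le_exp.2 (by have := hK t ht; cases abs_le.1 this; linarith)
  have hEb' : ∀ t ∈ Icc (-b) b, Real.exp (V t) ≤ Real.exp K := by
    intro t ht
    exact Real.exp_le_exp.2 (by have := hK t ht; cases abs_le.1 this; linarith)
  have hbound : ∀ t ∈ Ico t0 t1,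
      ‖F' t‖ ≤ ((1 + |lam1|) * Real.exp K) * ‖F t‖ + |lam1 - lam2| * (Real.exp K * R) := by
    intro t ht
    have htI : t ∈ Icc (-b) b := Ioo_subset_Icc_self (hsub' ht)
    have hnF : ‖F t‖ = max |p t - q t| |p' t * Real.exp (-V t) - q' t * Real.exp (-V t)| := by
      simp [hF, Prod.norm_def, Real.norm_eq_abs]
    have hnF' : ‖F' t‖ = max |p' t - q' t|
        |-lam1 * p t * Real.exp (-V t) - -lam2 * q t * Real.exp (-V t)| := by
      simp [hF', Prod.norm_def, Real.norm_eq_abs]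
    have hFnn : (0:ℝ) ≤ ‖F t‖ := norm_nonneg _
    have hRnn : (0:ℝ) ≤ R := (abs_nonneg _).trans (hR t htI)
    have hexpK : (0:ℝ) < Real.exp K := Real.exp_pos K
    -- first component bound
    have c1 : |p' t - q' t| ≤ Real.exp K * ‖F t‖ := by
      have : p' t - q' t =
          (p' t * Real.exp (-V t) - q' t * Real.exp (-V t)) * Real.exp (V t) := by
        have hprod : Real.exp (-V t) * Real.exp (V t) = 1 := by rw [← Real.exp_add]; simp
        linear_combination (-(p' t - q' t)) * hprod
      rw [this, abs_mul]
      have h1 : |p' t * Real.exp (-V t) - q' t * Real.exp (-V t)| ≤ ‖F t‖ := by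
        rw [hnF]; exact le_max_right _ _
      have h2 : |Real.exp (V t)| ≤ Real.exp K := by
        rw [abs_of_pos (Real.exp_pos _)]; exact hEb' t htI
      calc |p' t * Real.exp (-V t) - q' t * Real.exp (-V t)| * |Real.exp (V t)|
          ≤ ‖F t‖ * Real.exp K := by
            apply mul_le_mul h1 h2 (abs_nonneg _) hFnn
        _ = Real.exp K * ‖F t‖ := by ring
    -- second component bound
    have c2 : |-lam1 * p t * Real.exp (-V t) - -lam2 * q t * Real.exp (-V t)|
        ≤ |lam1| * Real.exp K * ‖F t‖ + |lam1 - lam2| * (Real.exp K * R) := by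
      have heq : -lam1 * p t * Real.exp (-V t) - -lam2 * q t * Real.exp (-V t)
          = -lam1 * ((p t - q t) * Real.exp (-V t)) + -(lam1 - lam2) * (q t * Real.exp (-V t)) := by
        ring
      rw [heq]
      refine (abs_add_le _ _).trans ?_
      have hEpos : (0:ℝ) < Real.exp (-V t) := Real.exp_pos _
      have hEle : Real.exp (-V t) ≤ Real.exp K := hEb t htI
      have hpq : |p t - q t| ≤ ‖F t‖ := by rw [hnF]; exact le_max_left _ _
      have t1 : |(-lam1) * ((p t - q t) * Real.exp (-V t))| ≤ |lam1| * (Real.exp K * ‖F t‖) := by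
        rw [abs_mul, abs_mul, abs_neg]
        apply mul_le_mul_of_nonneg_left _ (abs_nonneg lam1)
        rw [abs_of_pos hEpos]
        calc |p t - q t| * Real.exp (-V t) ≤ ‖F t‖ * Real.exp K :=
              mul_le_mul hpq hEle (le_of_lt hEpos) hFnn
          _ = Real.exp K * ‖F t‖ := by ring
      have t2 : |(-(lam1 - lam2)) * (q t * Real.exp (-V t))| ≤ |lam1 - lam2| * (Real.exp K * R) := by
        rw [abs_mul, abs_neg, abs_mul]
        apply mul_le_mul_of_nonneg_left _ (abs_nonneg _)
        rw [abs_of_pos hEpos]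
        calc |q t| * Real.exp (-V t) ≤ R * Real.exp K :=
              mul_le_mul (hR t htI) hEle (le_of_lt hEpos) hRnn
          _ = Real.exp K * R := by ring
      calc |(-lam1) * ((p t - q t) * Real.exp (-V t))| + |(-(lam1 - lam2)) * (q t * Real.exp (-V t))|
          ≤ |lam1| * (Real.exp K * ‖F t‖) + |lam1 - lam2| * (Real.exp K * R) :=
            add_le_add t1 t2
        _ = |lam1| * Real.exp K * ‖F t‖ + |lam1 - lam2| * (Real.exp K * R) := by ring
    rw [hnF']
    rw [max_le_iff]
    constructor
    · calc |p' t - q' t| ≤ Real.exp K * ‖F t‖ := c1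
        _ ≤ ((1 + |lam1|) * Real.exp K) * ‖F t‖ + |lam1 - lam2| * (Real.exp K * R) := by
            have h3 : (0:ℝ) ≤ |lam1 - lam2| * (Real.exp K * R) := by positivity
            have h4 : (0:ℝ) ≤ |lam1| * (Real.exp K * ‖F t‖) := by positivity
            nlinarith [h3, h4]
    · calc |-lam1 * p t * Real.exp (-V t) - -lam2 * q t * Real.exp (-V t)|
          ≤ |lam1| * Real.exp K * ‖F t‖ + |lam1 - lam2| * (Real.exp K * R) := c2
        _ ≤ ((1 + |lam1|) * Real.exp K) * ‖F t‖ + |lam1 - lam2| * (Real.exp K * R) := by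
            nlinarith [Real.exp_pos K, hFnn]
  have hδ' : ‖F t0‖ ≤ δ := by
    simpa [hF, Prod.norm_def, Real.norm_eq_abs] using hδ
  intro t ht
  have := norm_le_gronwallBound_of_norm_deriv_right_le hFc hFd hδ' hbound t ht
  simpa [hF, Prod.norm_def, Real.norm_eq_abs] using this

/-- a priori bound -/
lemma gron_apriori {b K : ℝ} {V V' : ℝ → ℝ}
    (hVc : ContinuousOn V (Icc (-b) b))
    (hV' : ∀ t ∈ Ioo (-b) b, HasDerivAt V (V' t) t)
    (hK : ∀ t ∈ Icc (-b) b, |V t| ≤ K)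
    {lam : ℝ} {p p' : ℝ → ℝ}
    (hp1 : ∀ t ∈ Icc (-b) b, HasDerivAt p (p' t) t)
    (hp2 : ∀ t ∈ Ioo (-b) b, HasDerivAt p' (V' t * p' t - lam * p t) t)
    (hpc : ContinuousOn p' (Icc (-b) b))
    {t0 t1 : ℝ} (h0 : -b < t0) (h1 : t1 ≤ b) (h01 : t0 ≤ t1) :
    ∀ t ∈ Icc t0 t1,
      max |p t| |p' t * Real.exp (-V t)|
        ≤ (max |p t0| |p' t0 * Real.exp (-V t0)|) *
            Real.exp ((1 + |lam|) * Real.exp K * (t - t0)) := by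
  intro t ht
  have h := gron_main (q := fun _ => (0:ℝ)) (q' := fun _ => (0:ℝ)) (R := 0)
    (lam2 := lam) (δ := max |p t0| |p' t0 * Real.exp (-V t0)|)
    hVc hV' hK hp1 hp2 hpc
    (fun t _ => hasDerivAt_const t 0)
    (fun t _ => by simpa using (hasDerivAt_const t (0:ℝ)))
    continuousOn_const (fun t _ => by simp) h0 h1 h01 (by simp) t ht
  simpa [gronwallBound_ε0] using h

/-- uniqueness -/
lemma gron_uniq {b K : ℝ} {V V' : ℝ → ℝ}
    (hVc : ContinuousOn V (Icc (-b) b))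
    (hV' : ∀ t ∈ Ioo (-b) b, HasDerivAt V (V' t) t)
    (hK : ∀ t ∈ Icc (-b) b, |V t| ≤ K)
    {lam : ℝ} {p p' q q' : ℝ → ℝ}
    (hp1 : ∀ t ∈ Icc (-b) b, HasDerivAt p (p' t) t)
    (hp2 : ∀ t ∈ Ioo (-b) b, HasDerivAt p' (V' t * p' t - lam * p t) t)
    (hpc : ContinuousOn p' (Icc (-b) b))
    (hq1 : ∀ t ∈ Icc (-b) b, HasDerivAt q (q' t) t)
    (hq2 : ∀ t ∈ Ioo (-b) b, HasDerivAt q' (V' t * q' t - lam * q t) t)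
    (hqc : ContinuousOn q' (Icc (-b) b))
    {t0 : ℝ} (h0 : -b < t0) (h0' : t0 ≤ b)
    (hi1 : p t0 = q t0) (hi2 : p' t0 = q' t0) :
    ∀ t ∈ Icc t0 b, p t = q t ∧ p' t = q' t := by
  have hqcont : ContinuousOn q (Icc (-b) b) :=
    fun x hx => ((hq1 x hx).continuousAt).continuousWithinAt
  obtain ⟨R, hR⟩ := (isCompact_Icc (a := -b) (b := b)).exists_bound_of_continuousOn hqcont
  intro t ht
  have h := gron_main (R := R) (δ := 0) hVc hV' hK hp1 hp2 hpc hq1 hq2 hqc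
    (fun s hs => by simpa [Real.norm_eq_abs] using hR s hs)
    h0 le_rfl h0' (by simp [hi1, hi2]) t ht
  rw [sub_self, abs_zero, zero_mul, gronwallBound_ε0_δ0] at h
  have h1 : |p t - q t| ≤ 0 := le_trans (le_max_left _ _) h
  have h2 : |p' t * Real.exp (-V t) - q' t * Real.exp (-V t)| ≤ 0 :=
    le_trans (le_max_right _ _) h
  have e1 : p t = q t := by have := abs_nonneg (p t - q t); have := abs_eq_zero.1 (le_antisymm h1 (abs_nonneg _)); linarith [this]
  have e2 : p' t = q' t := by
    have := abs_eq_zero.1 (le_antisymm h2 (abs_nonneg _))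
    have hE : Real.exp (-V t) ≠ 0 := (Real.exp_pos _).ne'
    have : (p' t - q' t) * Real.exp (-V t) = 0 := by linarith [this]
    rcases mul_eq_zero.1 this with h | h
    · linarith
    · exact absurd h hE
  exact ⟨e1, e2⟩

/-- Lipschitz dependence on the parameter -/
lemma gron_lip {b K : ℝ} {V V' : ℝ → ℝ}
    (hVc : ContinuousOn V (Icc (-b) b))
    (hV' : ∀ t ∈ Ioo (-b) b, HasDerivAt V (V' t) t)
    (hK : ∀ t ∈ Icc (-b) b, |V t| ≤ K)
    {lam1 lam2 R Λ : ℝ} {p p' q q' : ℝ → ℝ}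
    (hp1 : ∀ t ∈ Icc (-b) b, HasDerivAt p (p' t) t)
    (hp2 : ∀ t ∈ Ioo (-b) b, HasDerivAt p' (V' t * p' t - lam1 * p t) t)
    (hpc : ContinuousOn p' (Icc (-b) b))
    (hq1 : ∀ t ∈ Icc (-b) b, HasDerivAt q (q' t) t)
    (hq2 : ∀ t ∈ Ioo (-b) b, HasDerivAt q' (V' t * q' t - lam2 * q t) t)
    (hqc : ContinuousOn q' (Icc (-b) b))
    (hR : ∀ t ∈ Icc (-b) b, |q t| ≤ R)
    (hΛ : |lam1| ≤ Λ)
    {t0 t1 : ℝ} (h0 : -b < t0) (h1 : t1 ≤ b) (h01 : t0 ≤ t1)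
    (hi1 : p t0 = q t0) (hi2 : p' t0 = q' t0) :
    ∀ t ∈ Icc t0 t1,
      max |p t - q t| |p' t * Real.exp (-V t) - q' t * Real.exp (-V t)|
        ≤ |lam1 - lam2| *
          ((Real.exp K * R) * ((t1 - t0) * Real.exp ((1 + Λ) * Real.exp K * (t1 - t0)))) := by
  intro t ht
  have h := gron_main (δ := 0) hVc hV' hK hp1 hp2 hpc hq1 hq2 hqc hR
    h0 h1 h01 (by simp [hi1, hi2]) t ht
  refine h.trans ?_
  set Kc := (1 + |lam1|) * Real.exp K with hKc
  have hKcpos : 0 < Kc := by positivity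
  set ε := |lam1 - lam2| * (Real.exp K * R) with hε
  have hRnn : (0:ℝ) ≤ R := by
    have := hR t0 ⟨le_of_lt h0, h01.trans h1⟩; exact (abs_nonneg _).trans this
  have hεnn : 0 ≤ ε := by positivity
  rw [gronwallBound_of_K_ne_0 hKcpos.ne']
  -- gronwallBound 0 Kc ε x = 0 * exp (Kc x) + ε/Kc * (exp (Kc x) - 1)
  have hx0 : 0 ≤ t - t0 := by linarith [ht.1]
  have hx1 : t - t0 ≤ t1 - t0 := by linarith [ht.2]
  have key : Real.exp (Kc * (t - t0)) - 1 ≤ Kc * (t - t0) * Real.exp (Kc * (t - t0)) :=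
    exp_sub_one_le_self_mul_exp _
  have hKle : Kc ≤ (1 + Λ) * Real.exp K := by
    have := Real.exp_pos K
    rw [hKc]; nlinarith
  have hexp_mono : Real.exp (Kc * (t - t0)) ≤ Real.exp ((1 + Λ) * Real.exp K * (t1 - t0)) := by
    apply Real.exp_le_exp.2
    have h1' : Kc * (t - t0) ≤ Kc * (t1 - t0) := by nlinarith
    have h2' : Kc * (t1 - t0) ≤ (1 + Λ) * Real.exp K * (t1 - t0) := by nlinarith [sub_nonneg.2 (h01)]
    linarith
  have step : ε / Kc * (Real.exp (Kc * (t - t0)) - 1)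
      ≤ ε * ((t1 - t0) * Real.exp ((1 + Λ) * Real.exp K * (t1 - t0))) := by
    rw [div_mul_eq_mul_div, div_le_iff₀ hKcpos]
    have e1 : Real.exp (Kc * (t - t0)) - 1 ≤ Kc * ((t1 - t0) * Real.exp ((1+Λ) * Real.exp K * (t1 - t0))) := by
      have expnn : 0 ≤ Real.exp (Kc * (t - t0)) := (Real.exp_pos _).le
      nlinarith [key, hexp_mono, mul_nonneg (mul_nonneg hKcpos.le hx0) expnn,
        mul_le_mul_of_nonneg_left hexp_mono (mul_nonneg hKcpos.le hx0),
        mul_le_mul_of_nonneg_right (mul_le_mul_of_nonneg_left hx1 hKcpos.le)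
          (Real.exp_pos ((1+Λ) * Real.exp K * (t1 - t0))).le]
    nlinarith [mul_le_mul_of_nonneg_left e1 hεnn]
  calc (0:ℝ) * Real.exp (Kc * (t - t0)) + ε / Kc * (Real.exp (Kc * (t - t0)) - 1)
      = ε / Kc * (Real.exp (Kc * (t - t0)) - 1) := by ring
    _ ≤ ε * ((t1 - t0) * Real.exp ((1 + Λ) * Real.exp K * (t1 - t0))) := step
    _ = |lam1 - lam2| * ((Real.exp K * R) * ((t1 - t0) * Real.exp ((1 + Λ) * Real.exp K * (t1 - t0)))) := by
        rw [hε]; ring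



lemma deriv_eq_of_eqOn_Icc {a b : ℝ} (hab : a < b) {u v : ℝ → ℝ} {du dv t : ℝ}
    (ht : t ∈ Icc a b) (hu : HasDerivAt u du t) (hv : HasDerivAt v dv t)
    (heq : ∀ s ∈ Icc a b, u s = v s) : du = dv := by
  have h1 : HasDerivWithinAt u du (Icc a b) t := hu.hasDerivWithinAt
  have h2 : HasDerivWithinAt u dv (Icc a b) t :=
    (hv.hasDerivWithinAt).congr heq (heq t ht)
  have e1 := h1.derivWithin ((uniqueDiffOn_Icc hab) t ht)
  have e2 := h2.derivWithin ((uniqueDiffOn_Icc hab) t ht)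
  rw [← e1, ← e2]

lemma combo_sol {a b lam A B : ℝ} {V' : ℝ → ℝ} {f g f' g' : ℝ → ℝ}
    (hf : IsSol V' a b lam f f') (hg : IsSol V' a b lam g g') :
    IsSol V' a b lam (fun t => A * f t + B * g t) (fun t => A * f' t + B * g' t) := by
  constructor
  · intro t ht
    exact ((hf.1 t ht).const_mul A).add ((hg.1 t ht).const_mul B)
  · intro t ht
    have := ((hf.2 t ht).const_mul A).add ((hg.2 t ht).const_mul B)
    refine this.congr_deriv ?_
    ring

lemma mk_eig {a b lam A B : ℝ} {V' : ℝ → ℝ} {f g f' g' : ℝ → ℝ}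
    (hf : IsSol V' a b lam f f') (hg : IsSol V' a b lam g g')
    (hindep : ∀ A B : ℝ, (∀ t ∈ Set.Icc a b, A * f t + B * g t = 0) → A = 0 ∧ B = 0)
    (hAB : A ≠ 0 ∨ B ≠ 0)
    (ha : A * f' a + B * g' a = 0) (hb : A * f' b + B * g' b = 0) :
    IsNeumannEig V' a b lam := by
  refine ⟨fun t => A * f t + B * g t, fun t => A * f' t + B * g' t,
    combo_sol hf hg, ?_, ha, hb⟩
  by_contra h
  push_neg at h
  have := hindep A B h
  tauto

lemma part1_iff {a b : ℝ} (hab : a < b) {lam : ℝ} {V' : ℝ → ℝ} {f g f' g' : ℝ → ℝ}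
    (hf : IsSol V' a b lam f f') (hg : IsSol V' a b lam g g')
    (hindep : ∀ A B : ℝ, (∀ t ∈ Set.Icc a b, A * f t + B * g t = 0) → A = 0 ∧ B = 0)
    (hbasis : ∀ u u' : ℝ → ℝ, IsSol V' a b lam u u' →
      ∃ A B : ℝ, ∀ t ∈ Set.Icc a b, u t = A * f t + B * g t) :
    IsNeumannEig V' a b lam ↔ f' a * g' b - f' b * g' a = 0 := by
  have haI : a ∈ Icc a b := ⟨le_rfl, le_of_lt hab⟩
  have hbI : b ∈ Icc a b := ⟨le_of_lt hab, le_rfl⟩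
  constructor
  · rintro ⟨u, u', hSol, ⟨x, hx, hux⟩, hua, hub⟩
    obtain ⟨A, B, hAB⟩ := hbasis u u' hSol
    have hAB0 : A ≠ 0 ∨ B ≠ 0 := by
      by_contra h
      push_neg at h
      obtain ⟨hA, hB⟩ := h
      apply hux
      rw [hAB x hx, hA, hB]; ring
    have hcombo := combo_sol (A := A) (B := B) hf hg
    have ea : u' a = A * f' a + B * g' a :=
      deriv_eq_of_eqOn_Icc hab haI (hSol.1 a haI) (hcombo.1 a haI) hAB
    have eb : u' b = A * f' b + B * g' b :=
      deriv_eq_of_eqOn_Icc hab hbI (hSol.1 b hbI) (hcombo.1 b hbI) hAB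
    have e1 : A * f' a + B * g' a = 0 := by rw [← ea]; exact hua
    have e2 : A * f' b + B * g' b = 0 := by rw [← eb]; exact hub
    have hAd : A * (f' a * g' b - f' b * g' a) = 0 := by
      have : A * (f' a * g' b - f' b * g' a)
          = (A * f' a + B * g' a) * g' b - (A * f' b + B * g' b) * g' a := by ring
      rw [this, e1, e2]; ring
    have hBd : B * (f' a * g' b - f' b * g' a) = 0 := by
      have : B * (f' a * g' b - f' b * g' a)
          = f' a * (A * f' b + B * g' b) - f' b * (A * f' a + B * g' a) := by ring
      rw [this, e1, e2]; ring
    rcases hAB0 with h | h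
    · exact (mul_eq_zero.1 hAd).resolve_left h
    · exact (mul_eq_zero.1 hBd).resolve_left h
  · intro hd0
    by_cases h1 : f' b ≠ 0 ∨ g' b ≠ 0
    · refine mk_eig (A := g' b) (B := -f' b) hf hg hindep (h1.elim (fun h => Or.inr (by simpa using h)) (fun h => Or.inl h)) ?_ (by ring)
      linarith [hd0]
    · push_neg at h1
      obtain ⟨hfb, hgb⟩ := h1
      by_cases h2 : f' a ≠ 0 ∨ g' a ≠ 0
      · refine mk_eig (A := g' a) (B := -f' a) hf hg hindep (h2.elim (fun h => Or.inr (by simpa using h)) (fun h => Or.inl h)) (by ring) ?_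
        rw [hfb, hgb]; ring
      · push_neg at h2
        refine mk_eig (A := 1) (B := 0) hf hg hindep (by norm_num) ?_ ?_
        · rw [h2.1]; ring
        · rw [hfb]; ring


section Part3
variable {b K : ℝ} {V V' : ℝ → ℝ}

/-- V' is odd on the open interval if V is even. -/
lemma V'_odd (hVe : ∀ t, V (-t) = V t)
    (hV' : ∀ t ∈ Ioo (-b) b, HasDerivAt V (V' t) t) :
    ∀ t ∈ Ioo (-b) b, V' (-t) = -V' t := by
  intro t ht
  have htn : -t ∈ Ioo (-b) b := by constructor <;> [linarith [ht.2]; linarith [ht.1]]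
  have h1 : HasDerivAt V (V' (-t)) (-t) := hV' _ htn
  have h2 : HasDerivAt (fun s => V (-s)) (V' (-t) * -1) t :=
    h1.comp t ((hasDerivAt_id t).neg)
  have h3 : (fun s : ℝ => V (-s)) = V := funext hVe
  rw [h3] at h2
  have := (hV' t ht).unique h2
  linarith

/-- derivative of the reflection of a solution -/
lemma refl_sol₁ {u u' : ℝ → ℝ}
    (hu1 : ∀ t ∈ Icc (-b) b, HasDerivAt u (u' t) t) :
    ∀ t ∈ Icc (-b) b, HasDerivAt (fun s => u (-s)) (-u' (-t)) t := by
  intro t ht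
  have htn : -t ∈ Icc (-b) b := by constructor <;> [linarith [ht.2]; linarith [ht.1]]
  have := (hu1 _ htn).comp t ((hasDerivAt_id t).neg)
  refine this.congr_deriv ?_; ring

lemma refl_sol₂ {lam : ℝ} {u u' : ℝ → ℝ}
    (hu2 : ∀ t ∈ Icc (-b) b, HasDerivAt u' (V' t * u' t - lam * u t) t) :
    ∀ t ∈ Ioo (-b) b, HasDerivAt (fun s => -u' (-s))
      ((fun s => -V' (-s)) t * (fun s => -u' (-s)) t - lam * (fun s => u (-s)) t) t := by
  intro t ht
  have htn : -t ∈ Icc (-b) b := by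
    constructor <;> [linarith [ht.2.le]; linarith [ht.1.le]]
  have := ((hu2 _ htn).comp t ((hasDerivAt_id t).neg)).neg
  refine this.congr_deriv ?_
  simp only
  ring

lemma refl_V' (hVe : ∀ t, V (-t) = V t)
    (hV' : ∀ t ∈ Ioo (-b) b, HasDerivAt V (V' t) t) :
    ∀ t ∈ Ioo (-b) b, HasDerivAt V ((fun s => -V' (-s)) t) t := by
  intro t ht
  have htn : -t ∈ Ioo (-b) b := by constructor <;> [linarith [ht.2]; linarith [ht.1]]
  have h2 : HasDerivAt (fun s => V (-s)) (V' (-t) * -1) t :=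
    (hV' _ htn).comp t ((hasDerivAt_id t).neg)
  have h3 : (fun s : ℝ => V (-s)) = V := funext hVe
  rw [h3] at h2
  convert h2 using 1; simp only; ring

/-- forward vanishing: zero initial data propagates to the right -/
lemma uniq_zero (hb : 0 < b)
    (hVc : ContinuousOn V (Icc (-b) b))
    (hV' : ∀ t ∈ Ioo (-b) b, HasDerivAt V (V' t) t)
    (hK : ∀ t ∈ Icc (-b) b, |V t| ≤ K)
    {lam : ℝ} {u u' : ℝ → ℝ}
    (hu1 : ∀ t ∈ Icc (-b) b, HasDerivAt u (u' t) t)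
    (hu2 : ∀ t ∈ Ioo (-b) b, HasDerivAt u' (V' t * u' t - lam * u t) t)
    (huc : ContinuousOn u' (Icc (-b) b))
    {t0 : ℝ} (h0 : -b < t0) (h0' : t0 ≤ b)
    (hz : u t0 = 0) (hz' : u' t0 = 0) :
    ∀ t ∈ Icc t0 b, u t = 0 ∧ u' t = 0 := by
  have hq2 : ∀ t ∈ Ioo (-b) b,
      HasDerivAt (fun _ : ℝ => (0:ℝ)) (V' t * (fun _ : ℝ => (0:ℝ)) t - lam * (fun _ : ℝ => (0:ℝ)) t) t := by
    intro t ht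
    simpa using hasDerivAt_const t (0:ℝ)
  have := gron_uniq hVc hV' hK hu1 hu2 huc
    (fun t _ => hasDerivAt_const t (0:ℝ)) hq2 continuousOn_const h0 h0'
    (by simpa using hz) (by simpa using hz')
  exact this

/-- backward vanishing from the right endpoint, via reflection and a limiting argument -/
lemma back_zero (hb : 0 < b) (hVe : ∀ t, V (-t) = V t)
    (hVc : ContinuousOn V (Icc (-b) b))
    (hV' : ∀ t ∈ Ioo (-b) b, HasDerivAt V (V' t) t)
    (hK : ∀ t ∈ Icc (-b) b, |V t| ≤ K)
    {lam : ℝ} {u u' : ℝ → ℝ}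
    (hu1 : ∀ t ∈ Icc (-b) b, HasDerivAt u (u' t) t)
    (hu2 : ∀ t ∈ Icc (-b) b, HasDerivAt u' (V' t * u' t - lam * u t) t)
    (hzb : u b = 0) (hzb' : u' b = 0) :
    ∀ t ∈ Ioc (-b) b, u t = 0 ∧ u' t = 0 := by
  have huc : ContinuousOn u' (Icc (-b) b) :=
    fun x hx => ((hu2 x hx).continuousAt).continuousWithinAt
  have hucn : ContinuousOn (fun σ => u' (-σ)) (Icc (-b) b) := by
    apply huc.comp (continuous_neg.continuousOn)
    intro x hx
    have h1 := hx.1; have h2 := hx.2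
    simp only [Set.mem_Icc]
    constructor <;> linarith
  intro t ht
  rcases eq_or_lt_of_le ht.2 with heq | hlt
  · rw [heq]; exact ⟨hzb, hzb'⟩
  -- now t < b, so -b < -t
  have hnt : -b < -t := by linarith
  have hr1 := refl_sol₁ (b := b) hu1
  have hr2 := refl_sol₂ (b := b) (V' := V') (lam := lam) hu2
  have hrV := refl_V' (b := b) hVe hV'
  have hrc : ContinuousOn (fun s => -u' (-s)) (Icc (-b) b) := hucn.neg
  set M := (1 + |lam|) * Real.exp K with hM
  have hMnn : 0 ≤ M := by positivity
  set c := max |u (-(-t))| |(-u' (-(-t))) * Real.exp (-V (-t))| with hc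
  set φ : ℝ → ℝ :=
    fun σ => (max |u (-σ)| |(-u' (-σ)) * Real.exp (-V σ)|) * Real.exp (M * (2*b)) with hφ
  have claim1 : ∀ σ ∈ Ioo (-b) (-t), c ≤ φ σ := by
    intro σ hσ
    have h := gron_apriori (V' := fun s => -V' (-s)) hVc hrV hK hr1 hr2 hrc
      (t0 := σ) (t1 := b) hσ.1 le_rfl (by linarith [hσ.2, ht.1, ht.2]) (-t)
      ⟨hσ.2.le, by linarith [ht.1, ht.2]⟩
    refine h.trans ?_
    have hmx : (0:ℝ) ≤ max |u (-σ)| |(-u' (-σ)) * Real.exp (-V σ)| :=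
      le_max_iff.2 (Or.inl (abs_nonneg _))
    have : Real.exp (M * (-t - σ)) ≤ Real.exp (M * (2*b)) := by
      apply Real.exp_le_exp.2
      have h1 : -t - σ ≤ 2*b := by linarith [hσ.1, ht.1, ht.2]
      nlinarith
    rw [hφ]
    exact mul_le_mul_of_nonneg_left this hmx
  have hne : (𝓝[Ioo (-b) (-t)] (-b)).NeBot := by
    rw [nhdsWithin_Ioo_eq_nhdsGT hnt]
    infer_instance
  have claim2 : Filter.Tendsto φ (𝓝[Ioo (-b) (-t)] (-b)) (𝓝 0) := by
    have hsub : Ioo (-b) (-t) ⊆ Icc (-b) b := by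
      intro x hx; constructor <;> [linarith [hx.1.le]; linarith [hx.2, ht.1]]
    have hbm : (-b) ∈ Icc (-b) b := ⟨le_rfl, by linarith⟩
    have t1 : Filter.Tendsto (fun σ => u (-σ)) (𝓝[Ioo (-b) (-t)] (-b)) (𝓝 0) := by
      have hcont : ContinuousAt (fun σ => u (-σ)) (-b) := by
        have h0 : ContinuousAt u (- -b) := by
          rw [neg_neg]; exact (hu1 b ⟨by linarith, le_rfl⟩).continuousAt
        exact h0.comp (continuous_neg.continuousAt (x := (-b : ℝ)))
      have := hcont.continuousWithinAt (s := Ioo (-b) (-t))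
      rw [ContinuousWithinAt] at this
      simpa [hzb] using this
    have t2 : Filter.Tendsto (fun σ => (-u' (-σ)) * Real.exp (-V σ))
        (𝓝[Ioo (-b) (-t)] (-b)) (𝓝 0) := by
      have h1 : ContinuousWithinAt (fun σ => (-u' (-σ)) * Real.exp (-V σ)) (Icc (-b) b) (-b) := by
        apply ContinuousWithinAt.mul
        · exact (hucn.neg) (-b) hbm
        · exact (Real.continuous_exp.comp_continuousOn hVc.neg) (-b) hbm
      have h2 := h1.mono hsub
      rw [ContinuousWithinAt] at h2
      have : (-u' (-(-b))) * Real.exp (-V (-b)) = 0 := by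
        simp [hzb']
      rw [this] at h2
      exact h2
    have : Filter.Tendsto φ (𝓝[Ioo (-b) (-t)] (-b))
        (𝓝 ((max |(0:ℝ)| |(0:ℝ)|) * Real.exp (M * (2*b)))) := by
      apply Filter.Tendsto.mul_const
      exact (t1.abs).max (t2.abs)
    simpa using this
  have hcle : c ≤ 0 :=
    ge_of_tendsto claim2 (eventually_nhdsWithin_of_forall claim1)
  have h1 : |u t| ≤ 0 := by
    have : |u (-(-t))| ≤ c := le_max_left _ _
    simpa using this.trans hcle
  have h2 : |(-u' t) * Real.exp (-V (-t))| ≤ 0 := by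
    have : |(-u' (-(-t))) * Real.exp (-V (-t))| ≤ c := le_max_right _ _
    simpa using this.trans hcle
  constructor
  · exact abs_eq_zero.1 (le_antisymm h1 (abs_nonneg _))
  · have := abs_eq_zero.1 (le_antisymm h2 (abs_nonneg _))
    have hE : Real.exp (-V (-t)) ≠ 0 := (Real.exp_pos _).ne'
    rcases mul_eq_zero.1 this with h | h
    · linarith
    · exact absurd h hE

/-- the odd solution has nonvanishing derivative at 0 -/
lemma g'0_ne (hb : 0 < b)
    (hVc : ContinuousOn V (Icc (-b) b))
    (hV' : ∀ t ∈ Ioo (-b) b, HasDerivAt V (V' t) t)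
    (hK : ∀ t ∈ Icc (-b) b, |V t| ≤ K)
    {lam : ℝ} {g g' : ℝ → ℝ}
    (hg1 : ∀ t ∈ Icc (-b) b, HasDerivAt g (g' t) t)
    (hg2 : ∀ t ∈ Icc (-b) b, HasDerivAt g' (V' t * g' t - lam * g t) t)
    (hgo : ∀ t, g (-t) = - g t)
    (hgne : ¬ (∀ t ∈ Icc (-b) b, g t = 0)) :
    g' 0 ≠ 0 := by
  have hg0 : g 0 = 0 := by have := hgo 0; simp at this; linarith
  intro h0
  apply hgne
  have hgc : ContinuousOn g' (Icc (-b) b) :=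
    fun x hx => ((hg2 x hx).continuousAt).continuousWithinAt
  have hz := uniq_zero hb hVc hV' hK hg1 (fun t ht => hg2 t (Ioo_subset_Icc_self ht)) hgc
    (t0 := 0) (by linarith) (by linarith) hg0 h0
  intro t ht
  rcases le_or_gt 0 t with h | h
  · exact (hz t ⟨h, ht.2⟩).1
  · have : g (-t) = 0 := (hz (-t) ⟨by linarith, by linarith [ht.1]⟩).1
    have := hgo t
    rw [this] at *
    linarith [hgo t, this]

/-- odd case: an eigenfunction with nonzero odd part forces g' lam b = 0 -/
lemma odd_case (hb : 0 < b) (hVe : ∀ t, V (-t) = V t)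
    (hVc : ContinuousOn V (Icc (-b) b))
    (hV' : ∀ t ∈ Ioo (-b) b, HasDerivAt V (V' t) t)
    (hK : ∀ t ∈ Icc (-b) b, |V t| ≤ K)
    {lam : ℝ} {u u' g g' : ℝ → ℝ}
    (hu1 : ∀ t ∈ Icc (-b) b, HasDerivAt u (u' t) t)
    (hu2 : ∀ t ∈ Icc (-b) b, HasDerivAt u' (V' t * u' t - lam * u t) t)
    (hua : u' (-b) = 0) (hub : u' b = 0)
    (hg1 : ∀ t ∈ Icc (-b) b, HasDerivAt g (g' t) t)
    (hg2 : ∀ t ∈ Icc (-b) b, HasDerivAt g' (V' t * g' t - lam * g t) t)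
    (hgo : ∀ t, g (-t) = - g t)
    (hgne : ¬ (∀ t ∈ Icc (-b) b, g t = 0))
    (hodd : ∃ x ∈ Icc (-b) b, u x ≠ u (-x)) :
    g' b = 0 := by
  have hVodd := V'_odd (b := b) hVe hV'
  have hg0 : g 0 = 0 := by have := hgo 0; simp at this; linarith
  have hg'0 := g'0_ne hb hVc hV' hK hg1 hg2 hgo hgne
  set w : ℝ → ℝ := fun t => (u t - u (-t)) / 2 with hw
  set w' : ℝ → ℝ := fun t => (u' t + u' (-t)) / 2 with hw'
  have memneg : ∀ {t : ℝ}, t ∈ Icc (-b) b → -t ∈ Icc (-b) b := by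
    intro t ht; constructor <;> [linarith [ht.2]; linarith [ht.1]]
  have hw1 : ∀ t ∈ Icc (-b) b, HasDerivAt w (w' t) t := by
    intro t ht
    have h2 : HasDerivAt (fun s => u (-s)) (u' (-t) * -1) t :=
      (hu1 _ (memneg ht)).comp t ((hasDerivAt_id t).neg)
    have := ((hu1 t ht).sub h2).div_const 2
    refine this.congr_deriv ?_
    simp only [hw']; ring
  have hw2 : ∀ t ∈ Ioo (-b) b, HasDerivAt w' (V' t * w' t - lam * w t) t := by
    intro t ht
    have htI : t ∈ Icc (-b) b := Ioo_subset_Icc_self ht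
    have h2 : HasDerivAt (fun s => u' (-s)) ((V' (-t) * u' (-t) - lam * u (-t)) * -1) t :=
      (hu2 _ (memneg htI)).comp t ((hasDerivAt_id t).neg)
    have := ((hu2 t htI).add h2).div_const 2
    refine this.congr_deriv ?_
    rw [hVodd t ht] at *
    simp only [hw, hw']
    ring
  have hwc : ContinuousOn w' (Icc (-b) b) := by
    have huc : ContinuousOn u' (Icc (-b) b) :=
      fun x hx => ((hu2 x hx).continuousAt).continuousWithinAt
    have hucn : ContinuousOn (fun σ => u' (-σ)) (Icc (-b) b) := by
      apply huc.comp (continuous_neg.continuousOn)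
      intro x hx
      have h1 := hx.1; have h2 := hx.2
      simp only [Set.mem_Icc]
      constructor <;> linarith
    exact (huc.add hucn).div_const 2
  set cc : ℝ := w' 0 / g' 0 with hcc
  set q : ℝ → ℝ := fun t => cc * g t with hq
  set q' : ℝ → ℝ := fun t => cc * g' t with hq'
  have hq1 : ∀ t ∈ Icc (-b) b, HasDerivAt q (q' t) t :=
    fun t ht => (hg1 t ht).const_mul cc
  have hq2 : ∀ t ∈ Ioo (-b) b, HasDerivAt q' (V' t * q' t - lam * q t) t := by
    intro t ht
    have := (hg2 t (Ioo_subset_Icc_self ht)).const_mul cc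
    refine this.congr_deriv ?_
    simp only [hq, hq']; ring
  have hqc : ContinuousOn q' (Icc (-b) b) := by
    have : ContinuousOn g' (Icc (-b) b) :=
      fun x hx => ((hg2 x hx).continuousAt).continuousWithinAt
    exact this.const_smul cc
  have hkey := gron_uniq hVc hV' hK hw1 hw2 hwc hq1 hq2 hqc
    (t0 := 0) (by linarith) (by linarith)
    (by simp [hw, hq, hg0]) (by simp [hq', hcc]; field_simp)
  -- w = cc * g on [0, b]
  have hwodd : ∀ t, w (-t) = - w t := by intro t; simp [hw]; ring
  have hcc0 : cc ≠ 0 := by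
    obtain ⟨x, hx, hux⟩ := hodd
    have hwx : w x ≠ 0 := by
      simp only [hw]
      intro h
      apply hux
      have : u x - u (-x) = 0 := by linarith [h]
      linarith
    intro h0
    rcases le_or_gt 0 x with hle | hlt
    · have := (hkey x ⟨hle, hx.2⟩).1
      simp only [hq, h0, zero_mul] at this
      exact hwx this
    · have hmx : -x ∈ Icc 0 b := ⟨by linarith, by linarith [hx.1]⟩
      have := (hkey (-x) hmx).1
      simp only [hq, h0, zero_mul] at this
      rw [hwodd x] at this
      exact hwx (by linarith)
  have hwb : w' b = cc * g' b := by
    have := (hkey b ⟨by linarith, le_rfl⟩).2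
    simpa [hq'] using this
  have hwb0 : w' b = 0 := by
    simp only [hw']
    rw [hub, hua]
    ring
  rw [hwb0] at hwb
  exact by
    rcases mul_eq_zero.1 hwb.symm with h | h
    · exact absurd h hcc0
    · exact h

set_option maxHeartbeats 1600000

/-- even case: even Neumann eigenfunction forces an odd eigenvalue `μ ≤ lam` -/
lemma even_case (hb : 0 < b) (hVe : ∀ t, V (-t) = V t)
    (hVc : ContinuousOn V (Icc (-b) b))
    (hV' : ∀ t ∈ Ioo (-b) b, HasDerivAt V (V' t) t)
    (hK : ∀ t ∈ Icc (-b) b, |V t| ≤ K)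
    {lam : ℝ} (hlam : 0 < lam) {u u' : ℝ → ℝ}
    (hu1 : ∀ t ∈ Icc (-b) b, HasDerivAt u (u' t) t)
    (hu2 : ∀ t ∈ Icc (-b) b, HasDerivAt u' (V' t * u' t - lam * u t) t)
    (hua : u' (-b) = 0) (hub : u' b = 0)
    (hueven : ∀ t ∈ Icc (-b) b, u (-t) = u t)
    (hunz : ∃ x ∈ Icc (-b) b, u x ≠ 0)
    {g g' : ℝ → ℝ → ℝ}
    (hg1 : ∀ μ, ∀ t ∈ Icc (-b) b, HasDerivAt (g μ) (g' μ t) t)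
    (hg2 : ∀ μ, ∀ t ∈ Icc (-b) b, HasDerivAt (g' μ) (V' t * g' μ t - μ * g μ t) t)
    (hgo : ∀ μ t, g μ (-t) = - g μ t)
    (hgne : ∀ μ, ¬ (∀ t ∈ Icc (-b) b, g μ t = 0)) :
    ∃ μ, 0 < μ ∧ μ ≤ lam ∧ g' μ b = 0 := by
  have hbb : -b < b := by linarith
  have h0I : (0:ℝ) ∈ Icc (-b) b := ⟨by linarith, by linarith⟩
  have hbI : b ∈ Icc (-b) b := ⟨by linarith, le_rfl⟩
  have hsub0 : Icc (0:ℝ) b ⊆ Icc (-b) b := fun x hx => ⟨by linarith [hx.1], hx.2⟩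
  have hsubO : Ioo (0:ℝ) b ⊆ Ioo (-b) b := fun x hx => ⟨by linarith [hx.1], hx.2⟩
  have huc : ContinuousOn u' (Icc (-b) b) :=
    fun x hx => ((hu2 x hx).continuousAt).continuousWithinAt
  have hucont : ContinuousOn u (Icc (-b) b) :=
    fun x hx => ((hu1 x hx).continuousAt).continuousWithinAt
  have hEc : ContinuousOn (fun t => Real.exp (-V t)) (Icc (-b) b) :=
    Real.continuous_exp.comp_continuousOn hVc.neg
  -- u' 0 = 0
  have hu'0 : u' 0 = 0 := by
    have hc : HasDerivAt (fun s => u (-s)) (u' (-0) * -1) 0 :=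
      (hu1 (-0) (by simpa using h0I)).comp 0 ((hasDerivAt_id 0).neg)
    have := deriv_eq_of_eqOn_Icc hbb h0I (hu1 0 h0I) hc
      (fun s hs => (hueven s hs).symm)
    simp at this
    linarith
  -- u 0 ≠ 0
  have hu0 : u 0 ≠ 0 := by
    intro h0
    obtain ⟨x, hx, hne⟩ := hunz
    apply hne
    have hz := uniq_zero hb hVc hV' hK hu1 (fun t ht => hu2 t (Ioo_subset_Icc_self ht)) huc
      (t0 := 0) (by linarith) (by linarith) h0 hu'0
    rcases le_or_gt 0 x with h | h
    · exact (hz x ⟨h, hx.2⟩).1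
    · rw [← hueven x hx]
      exact (hz (-x) ⟨by linarith, by linarith [hx.1]⟩).1
  -- u b ≠ 0
  have hubne : u b ≠ 0 := by
    intro h0
    obtain ⟨x, hx, hne⟩ := hunz
    apply hne
    have hz := back_zero hb hVe hVc hV' hK hu1 hu2 h0 hub
    rcases eq_or_lt_of_le hx.1 with h | h
    · rw [← hueven x hx]
      have : -x = b := by linarith [h]
      rw [this]
      exact h0
    · exact (hz x ⟨h, hx.2⟩).1
  -- there is a zero of u in (0, b)
  have hzero : ∃ c ∈ Ioo 0 b, u c = 0 := by
    by_contra hnc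
    push_neg at hnc
    have hnz : ∀ t ∈ Icc 0 b, u t ≠ 0 := by
      intro t ht
      rcases eq_or_lt_of_le ht.1 with h | h
      · rw [← h]; exact hu0
      · rcases eq_or_lt_of_le ht.2 with h' | h'
        · rw [h']; exact hubne
        · exact hnc t ⟨h, h'⟩
    have hsame : ∀ t ∈ Icc 0 b, 0 < u t * u 0 := by
      intro t ht
      rcases lt_trichotomy (u t * u 0) 0 with hlt | heq | hgt
      · exfalso
        have hcont : ContinuousOn u (Icc 0 b) := hucont.mono hsub0
        have hcont' : ContinuousOn u (Icc 0 t) := hcont.mono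
          (fun x hx => ⟨hx.1, hx.2.trans ht.2⟩)
        rcases mul_neg_iff.1 hlt with ⟨h1, h2⟩ | ⟨h1, h2⟩
        · -- u t > 0 > u 0
          have : (0:ℝ) ∈ Ioo (u 0) (u t) := ⟨h2, h1⟩
          obtain ⟨s, hs, hsu⟩ := intermediate_value_Ioo ht.1 hcont' this
          exact hnz s ⟨le_of_lt hs.1, hs.2.le.trans ht.2⟩ hsu
        · have : (0:ℝ) ∈ Ioo (u t) (u 0) := ⟨h1, h2⟩
          obtain ⟨s, hs, hsu⟩ := intermediate_value_Ioo' ht.1 hcont' this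
          exact hnz s ⟨le_of_lt hs.1, hs.2.le.trans ht.2⟩ hsu
      · exfalso
        rcases mul_eq_zero.1 heq with h | h
        · exact hnz t ht h
        · exact hu0 h
      · exact hgt
    -- φ := momentum × u 0 is strictly decreasing yet vanishes at both ends
    set φ : ℝ → ℝ := fun t => (u' t * Real.exp (-V t)) * u 0 with hφ
    have hφc : ContinuousOn φ (Icc 0 b) :=
      (((huc.mul hEc).mono hsub0).mul continuousOn_const)
    have hφd : ∀ t ∈ Ioo 0 b, HasDerivAt φ ((-lam * u t * Real.exp (-V t)) * u 0) t := by
      intro t ht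
      exact (hasDerivAt_mom' (hV' t (hsubO ht)) (hu2 t (hsub0 (Ioo_subset_Icc_self ht)))).mul_const _
    have hanti : StrictAntiOn φ (Icc 0 b) := by
      apply strictAntiOn_of_deriv_neg (convex_Icc 0 b) hφc
      intro t ht
      rw [interior_Icc] at ht
      rw [(hφd t ht).deriv]
      have h1 := hsame t (Ioo_subset_Icc_self ht)
      have h2 := Real.exp_pos (-V t)
      nlinarith [mul_pos hlam (mul_pos h2 h1)]
    have h1 : φ b < φ 0 := hanti ⟨le_rfl, by linarith⟩ ⟨by linarith, le_rfl⟩ hb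
    have h2 : φ 0 = 0 := by simp [hφ, hu'0]
    have h3 : φ b = 0 := by simp [hφ, hub]
    linarith
  obtain ⟨c, hcI, hcz⟩ := hzero
  -- last zero of u
  set Z : Set ℝ := {t | t ∈ Icc 0 b ∧ u t = 0} with hZ
  have hZne : Z.Nonempty := ⟨c, ⟨Ioo_subset_Icc_self hcI, hcz⟩⟩
  have hZbdd : BddAbove Z := ⟨b, fun t htz => htz.1.2⟩
  set cs := sSup Z with hcs
  have hccs : c ≤ cs := le_csSup hZbdd ⟨Ioo_subset_Icc_self hcI, hcz⟩
  have hcsle : cs ≤ b := csSup_le hZne (fun t htz => htz.1.2)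
  have hcs0 : 0 < cs := lt_of_lt_of_le hcI.1 hccs
  have hcsI : cs ∈ Icc (-b) b := ⟨by linarith, hcsle⟩
  have hucs : u cs = 0 := by
    have hcl : cs ∈ closure Z := csSup_mem_closure hZne hZbdd
    haveI := mem_closure_iff_nhdsWithin_neBot.1 hcl
    have h1 : Filter.Tendsto u (𝓝[Z] cs) (𝓝 (u cs)) :=
      ((hu1 cs hcsI).continuousAt).continuousWithinAt
    have h2 : Filter.Tendsto u (𝓝[Z] cs) (𝓝 0) :=
      tendsto_nhdsWithin_congr (fun t htz => htz.2.symm) tendsto_const_nhds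
    exact tendsto_nhds_unique h1 h2
  have hcsb : cs < b := by
    rcases eq_or_lt_of_le hcsle with h | h
    · exact absurd (h ▸ hucs) hubne
    · exact h
  -- sign constancy on (cs, b]
  have hsign : ∀ t ∈ Ioc cs b, 0 < u t * u b := by
    have hnz2 : ∀ t ∈ Ioc cs b, u t ≠ 0 := by
      intro t ht h0
      have : t ∈ Z := ⟨⟨by linarith [ht.1], ht.2⟩, h0⟩
      linarith [le_csSup hZbdd this, ht.1]
    intro t ht
    rcases lt_trichotomy (u t * u b) 0 with hlt | heq | hgt
    · exfalso
      have hcont : ContinuousOn u (Icc t b) := hucont.mono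
        (fun x hx => ⟨by linarith [hx.1, ht.1], hx.2⟩)
      rcases mul_neg_iff.1 hlt with ⟨h1, h2⟩ | ⟨h1, h2⟩
      · obtain ⟨s, hs, hsu⟩ := intermediate_value_Ioo' ht.2 hcont ⟨h2, h1⟩
        exact hnz2 s ⟨lt_trans ht.1 hs.1, hs.2.le⟩ hsu
      · obtain ⟨s, hs, hsu⟩ := intermediate_value_Ioo ht.2 hcont ⟨h1, h2⟩
        exact hnz2 s ⟨lt_trans ht.1 hs.1, hs.2.le⟩ hsu
    · exfalso
      rcases mul_eq_zero.1 heq with h | h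
      · exact hnz2 t ht h
      · exact hubne h
    · exact hgt
  -- derivative sign at cs
  have hslope : 0 ≤ u' cs * u b := by
    have hd := hu1 cs hcsI
    rw [hasDerivAt_iff_tendsto_slope] at hd
    have hd' : Filter.Tendsto (slope u cs) (𝓝[Ioc cs b] cs) (𝓝 (u' cs)) :=
      hd.mono_left (nhdsWithin_mono cs (fun x hx => ne_of_gt hx.1))
    haveI : (𝓝[Ioc cs b] cs).NeBot := by
      rw [nhdsWithin_Ioc_eq_nhdsGT hcsb]
      infer_instance
    have hmul : Filter.Tendsto (fun t => slope u cs t * u b) (𝓝[Ioc cs b] cs)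
        (𝓝 (u' cs * u b)) := hd'.mul_const _
    apply ge_of_tendsto hmul
    apply eventually_nhdsWithin_of_forall
    intro t ht
    have h1 := hsign t ht
    have h2 : 0 < t - cs := by linarith [ht.1]
    rw [slope_def_field]
    rw [div_mul_eq_mul_div]
    apply div_nonneg _ h2.le
    rw [hucs]
    ring_nf
    nlinarith
  -- normalized odd solutions
  have hg'0 : ∀ μ : ℝ, g' μ 0 ≠ 0 := fun μ =>
    g'0_ne hb hVc hV' hK (hg1 μ) (hg2 μ) (hgo μ) (hgne μ)
  have hgz : ∀ μ : ℝ, g μ 0 = 0 := by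
    intro μ; have := hgo μ 0; simp at this; linarith
  set gg : ℝ → ℝ → ℝ := fun μ t => g μ t / g' μ 0 with hgg
  set gg' : ℝ → ℝ → ℝ := fun μ t => g' μ t / g' μ 0 with hgg'
  set mm : ℝ → ℝ → ℝ := fun μ t => gg' μ t * Real.exp (-V t) with hmm
  have hgg1 : ∀ μ : ℝ, ∀ t ∈ Icc (-b) b, HasDerivAt (gg μ) (gg' μ t) t :=
    fun μ t ht => (hg1 μ t ht).div_const _
  have hgg2 : ∀ μ : ℝ, ∀ t ∈ Icc (-b) b, HasDerivAt (gg' μ) (V' t * gg' μ t - μ * gg μ t) t := by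
    intro μ t ht
    have := (hg2 μ t ht).div_const (g' μ 0)
    refine this.congr_deriv ?_
    simp only [hgg, hgg']
    ring
  have hggc : ∀ μ : ℝ, ContinuousOn (gg' μ) (Icc (-b) b) :=
    fun μ x hx => ((hgg2 μ x hx).continuousAt).continuousWithinAt
  have hggcont : ∀ μ : ℝ, ContinuousOn (gg μ) (Icc (-b) b) :=
    fun μ x hx => ((hgg1 μ x hx).continuousAt).continuousWithinAt
  have hgg0 : ∀ μ : ℝ, gg μ 0 = 0 := by intro μ; simp only [hgg]; rw [hgz μ]; simp
  have hgg'0 : ∀ μ : ℝ, gg' μ 0 = 1 := fun μ => div_self (hg'0 μ)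
  have hggodd : ∀ μ t : ℝ, gg μ (-t) = - gg μ t := by
    intro μ t; simp only [hgg]; rw [hgo μ t]; ring
  have hmmc : ∀ μ : ℝ, ContinuousOn (mm μ) (Icc (-b) b) := by
    intro μ; simp only [hmm]; exact (hggc μ).mul hEc
  have hmm0 : ∀ μ : ℝ, mm μ 0 = Real.exp (-V 0) := by
    intro μ; simp only [hmm]; rw [hgg'0 μ]; ring
  set M : ℝ := (1 + lam) * Real.exp K with hM
  have hMpos : 0 < M := by positivity
  set R : ℝ := Real.exp K * Real.exp (M * b) with hR
  have hRpos : 0 < R := by positivity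
  -- a priori bound
  have hapri : ∀ μ ∈ Icc (0:ℝ) lam, ∀ t ∈ Icc (0:ℝ) b, max |gg μ t| |mm μ t| ≤ R := by
    intro μ hμ t ht
    have h := gron_apriori hVc hV' hK (hgg1 μ)
      (fun s hs => hgg2 μ s (Ioo_subset_Icc_self hs)) (hggc μ)
      (t0 := 0) (t1 := b) (by linarith) le_rfl hb.le t ht
    simp only [hmm]
    refine h.trans ?_
    have e1 : max |gg μ 0| |gg' μ 0 * Real.exp (-V 0)| = Real.exp (-V 0) := by
      rw [hgg0 μ, hgg'0 μ, abs_zero, one_mul, abs_of_pos (Real.exp_pos (-V 0))]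
      exact max_eq_right (Real.exp_pos (-V 0)).le
    rw [e1, hR]
    have h3 : Real.exp (-V 0) ≤ Real.exp K :=
      Real.exp_le_exp.2 (by have := hK 0 h0I; rcases abs_le.1 this with ⟨l, r⟩; linarith)
    have h4 : Real.exp ((1 + |μ|) * Real.exp K * (t - 0)) ≤ Real.exp (M * b) := by
      apply Real.exp_le_exp.2
      rw [hM, abs_of_nonneg hμ.1, sub_zero]
      have hμl := hμ.2
      have ht0 := ht.1
      have htb := ht.2
      have he := Real.exp_pos K
      have h5 : (1 + μ) * Real.exp K ≤ (1 + lam) * Real.exp K := by nlinarith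
      have h6 : (0:ℝ) ≤ (1 + μ) * Real.exp K := by nlinarith [hμ.1]
      calc (1 + μ) * Real.exp K * t ≤ (1 + μ) * Real.exp K * b := by nlinarith
        _ ≤ (1 + lam) * Real.exp K * b := by nlinarith
    exact mul_le_mul h3 h4 (Real.exp_pos _).le (Real.exp_pos _).le
  have hRg : ∀ μ ∈ Icc (0:ℝ) lam, ∀ t ∈ Icc (-b) b, |gg μ t| ≤ R := by
    intro μ hμ t ht
    rcases le_or_gt 0 t with h | h
    · exact (le_max_left _ _).trans (hapri μ hμ t ⟨h, ht.2⟩)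
    · have h2 := (le_max_left _ _).trans (hapri μ hμ (-t) ⟨by linarith, by linarith [ht.1]⟩)
      have h3 : gg μ (-t) = - gg μ t := hggodd μ t
      rw [h3, abs_neg] at h2
      exact h2
  set CC : ℝ := (Real.exp K * R) * (b * Real.exp ((1 + lam) * Real.exp K * b)) with hCC
  have hCCpos : 0 < CC := by positivity
  have hLip : ∀ μ1 ∈ Icc (0:ℝ) lam, ∀ μ2 ∈ Icc (0:ℝ) lam, ∀ t ∈ Icc (0:ℝ) b,
      |mm μ1 t - mm μ2 t| ≤ |μ1 - μ2| * CC := by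
    intro μ1 hμ1 μ2 hμ2 t ht
    have h := gron_lip hVc hV' hK (hgg1 μ1)
      (fun s hs => hgg2 μ1 s (Ioo_subset_Icc_self hs)) (hggc μ1)
      (hgg1 μ2) (fun s hs => hgg2 μ2 s (Ioo_subset_Icc_self hs)) (hggc μ2)
      (fun s hs => hRg μ2 hμ2 s hs) (Λ := lam)
      (by rw [abs_of_nonneg hμ1.1]; exact hμ1.2)
      (t0 := 0) (t1 := b) (by linarith) le_rfl hb.le
      (by rw [hgg0 μ1, hgg0 μ2]) (by rw [hgg'0 μ1, hgg'0 μ2]) t ht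
    have h2 := (le_max_right _ _).trans h
    simp only [hmm]
    refine h2.trans ?_
    rw [sub_zero, hCC]
    try ring_nf
  set E : Set ℝ := {μ : ℝ | μ ∈ Icc (0:ℝ) lam ∧ ∃ t ∈ Icc (0:ℝ) b, mm μ t ≤ 0} with hE
  have h0lam : (0:ℝ) ∈ Icc (0:ℝ) lam := ⟨le_rfl, hlam.le⟩
  -- mm 0 is constant
  have hm0const : ∀ t ∈ Icc (0:ℝ) b, mm 0 t = Real.exp (-V 0) := by
    have hcont : ContinuousOn (mm 0) (Icc (0:ℝ) b) := (hmmc 0).mono hsub0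
    have hder : ∀ t ∈ Ico (0:ℝ) b, HasDerivWithinAt (mm 0) 0 (Ici t) t := by
      intro t ht
      have hIoo : t ∈ Ioo (-b) b := ⟨by linarith [ht.1], ht.2⟩
      have hD := hasDerivAt_mom' (hV' t hIoo) (hgg2 0 t (Ioo_subset_Icc_self hIoo))
      have h0 : -(0:ℝ) * gg 0 t * Real.exp (-V t) = 0 := by ring
      rw [h0] at hD
      exact hD.hasDerivWithinAt
    have hcst := constant_of_has_deriv_right_zero hcont hder
    intro t ht
    rw [hcst t ht, hmm0 0]
  set δ0 : ℝ := Real.exp (-K) / CC with hδ0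
  have hδ0pos : 0 < δ0 := by positivity
  have hlb : ∀ μ ∈ E, δ0 ≤ μ := by
    rintro μ ⟨hμI, t, ht, hmt⟩
    have h1 := hLip μ hμI 0 h0lam t ht
    have h2 := hm0const t ht
    have h3 : Real.exp (-K) ≤ Real.exp (-V 0) :=
      Real.exp_le_exp.2 (by have := hK 0 h0I; rcases abs_le.1 this with ⟨l, r⟩; linarith)
    have h4 : |μ - 0| = μ := by rw [sub_zero, abs_of_nonneg hμI.1]
    rw [h4] at h1
    have habs : mm 0 t - mm μ t ≤ |mm μ t - mm 0 t| := by
      rw [abs_sub_comm]; exact le_abs_self _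
    rw [hδ0, div_le_iff₀ hCCpos]
    nlinarith
  have hEbdd : BddBelow E := ⟨0, fun μ hμ => hμ.1.1⟩
  -- lam belongs to E
  have hlamE : lam ∈ E := by
    by_contra hnE
    have hpos : ∀ t ∈ Icc (0:ℝ) b, 0 < mm lam t := by
      intro t ht
      by_contra hle
      push_neg at hle
      exact hnE ⟨⟨hlam.le, le_rfl⟩, t, ht, hle⟩
    have hgg'pos : ∀ t ∈ Icc (0:ℝ) b, 0 < gg' lam t := by
      intro t ht
      have h1 := hpos t ht
      simp only [hmm] at h1
      nlinarith [Real.exp_pos (-V t)]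
    have hmono : StrictMonoOn (gg lam) (Icc (0:ℝ) b) := by
      apply strictMonoOn_of_deriv_pos (convex_Icc 0 b) ((hggcont lam).mono hsub0)
      intro t ht
      rw [interior_Icc] at ht
      rw [(hgg1 lam t (hsub0 (Ioo_subset_Icc_self ht))).deriv]
      exact hgg'pos t (Ioo_subset_Icc_self ht)
    have hggposl : ∀ t ∈ Ioc (0:ℝ) b, 0 < gg lam t := by
      intro t ht
      have := hmono ⟨le_rfl, hb.le⟩ ⟨ht.1.le, ht.2⟩ ht.1
      rwa [hgg0 lam] at this
    set k : ℝ → ℝ := fun t =>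
      gg lam t * (u' t * Real.exp (-V t)) - u t * (gg' lam t * Real.exp (-V t)) with hk
    have hsubcs : Icc cs b ⊆ Icc (-b) b := fun x hx => ⟨by linarith [hx.1, hcs0], hx.2⟩
    have hkc : ContinuousOn k (Icc cs b) := by
      apply ContinuousOn.sub
      · exact (((hggcont lam).mul (huc.mul hEc))).mono hsubcs
      · exact ((hucont.mul ((hggc lam).mul hEc))).mono hsubcs
    have hkd : ∀ t ∈ Ico cs b, HasDerivWithinAt k 0 (Ici t) t := by
      intro t ht
      have hIoo : t ∈ Ioo (-b) b := ⟨by linarith [ht.1, hcs0], ht.2⟩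
      have hIcc := Ioo_subset_Icc_self hIoo
      have h1 := (hgg1 lam t hIcc).mul (hasDerivAt_mom' (hV' t hIoo) (hu2 t hIcc))
      have h2 := (hu1 t hIcc).mul (hasDerivAt_mom' (hV' t hIoo) (hgg2 lam t hIcc))
      have h3 := h1.sub h2
      have h4 : HasDerivAt k 0 t := by
        refine h3.congr_deriv ?_
        ring
      exact h4.hasDerivWithinAt
    have hkconst := constant_of_has_deriv_right_zero hkc hkd
    have hkb := hkconst b ⟨hcsle, le_rfl⟩
    have he1 : k b = -(u b * (gg' lam b * Real.exp (-V b))) := by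
      simp only [hk]; rw [hub]; ring
    have he2 : k cs = gg lam cs * (u' cs * Real.exp (-V cs)) := by
      simp only [hk]; rw [hucs]; ring
    have hp1 : 0 < gg lam cs := hggposl cs ⟨hcs0, hcsle⟩
    have hp2 : 0 < gg' lam b * Real.exp (-V b) := by
      have := hpos b ⟨hb.le, le_rfl⟩
      simpa only [hmm] using this
    have hub2 : 0 < u b * u b := mul_self_pos.2 hubne
    have hq1 : k b * u b < 0 := by
      rw [he1]
      nlinarith [mul_pos hp2 hub2]
    have hq2 : 0 ≤ k cs * u b := by
      rw [he2]
      have hcs_exp := Real.exp_pos (-V cs)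
      nlinarith [mul_nonneg (mul_pos hp1 hcs_exp).le hslope]
    rw [hkb] at hq1
    linarith
  set μs : ℝ := sInf E with hμs
  have hEne : E.Nonempty := ⟨lam, hlamE⟩
  have hμle : μs ≤ lam := csInf_le hEbdd hlamE
  have hμpos : 0 < μs := lt_of_lt_of_le hδ0pos (le_csInf hEne hlb)
  have hμI : μs ∈ Icc (0:ℝ) lam := ⟨hμpos.le, hμle⟩
  have hnonneg : ∀ t ∈ Icc (0:ℝ) b, 0 ≤ mm μs t := by
    intro t ht
    by_contra hlt
    push_neg at hlt
    set η : ℝ := -(mm μs t) with hη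
    have hηpos : 0 < η := by rw [hη]; linarith
    set μ : ℝ := μs - min (η / (2*CC)) (μs/2) with hμd
    have hminpos : 0 < min (η / (2*CC)) (μs/2) := lt_min (by positivity) (by positivity)
    have hμlt : μ < μs := by rw [hμd]; linarith
    have hμ0 : 0 < μ := by
      have := min_le_right (η / (2*CC)) (μs/2)
      rw [hμd]; linarith
    have hμIcc : μ ∈ Icc (0:ℝ) lam := ⟨hμ0.le, by linarith⟩
    have hdist : |μ - μs| ≤ η / (2*CC) := by
      rw [abs_of_nonpos (by linarith : μ - μs ≤ 0)]
      have := min_le_left (η / (2*CC)) (μs/2)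
      rw [hμd]; linarith
    have h1 := hLip μ hμIcc μs hμI t ht
    have habs : mm μ t - mm μs t ≤ |mm μ t - mm μs t| := le_abs_self _
    have h3 : |μ - μs| * CC ≤ η / 2 := by
      calc |μ - μs| * CC ≤ (η/(2*CC)) * CC := mul_le_mul_of_nonneg_right hdist hCCpos.le
        _ = η/2 := by field_simp
    have h2 : mm μ t ≤ 0 := by nlinarith
    have hmem : μ ∈ E := ⟨hμIcc, t, ht, h2⟩
    have := csInf_le hEbdd hmem
    linarith
  have hexists0 : ∃ ts ∈ Icc (0:ℝ) b, mm μs ts = 0 := by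
    by_contra hno
    push_neg at hno
    have hstrict : ∀ t ∈ Icc (0:ℝ) b, 0 < mm μs t :=
      fun t ht => lt_of_le_of_ne (hnonneg t ht) (Ne.symm (hno t ht))
    obtain ⟨t₀, ht₀, hmin⟩ := isCompact_Icc.exists_isMinOn
      (⟨0, le_rfl, hb.le⟩ : (Icc (0:ℝ) b).Nonempty) ((hmmc μs).mono hsub0)
    set ε : ℝ := mm μs t₀ with hε
    have hεpos : 0 < ε := hstrict t₀ ht₀
    have hstep : μs < μs + ε/(2*CC) := by
      have : 0 < ε/(2*CC) := by positivity
      linarith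
    obtain ⟨μ, hμE, hμlt2⟩ := exists_lt_of_csInf_lt hEne hstep
    have hge : μs ≤ μ := csInf_le hEbdd hμE
    obtain ⟨hμIcc2, t, ht, hmt⟩ := hμE
    have h1 := hLip μ hμIcc2 μs hμI t ht
    have h2 : |μ - μs| ≤ ε/(2*CC) := by
      rw [abs_of_nonneg (by linarith)]; linarith
    have h3 := (isMinOn_iff.1 hmin) t ht
    have habs : mm μs t - mm μ t ≤ |mm μ t - mm μs t| := by
      rw [abs_sub_comm]; exact le_abs_self _
    have h4 : |μ - μs| * CC ≤ ε/2 := by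
      calc |μ - μs| * CC ≤ (ε/(2*CC)) * CC := mul_le_mul_of_nonneg_right h2 hCCpos.le
        _ = ε/2 := by field_simp
    nlinarith
  obtain ⟨ts, htsI, hts0⟩ := hexists0
  have hgg'nn : ∀ t ∈ Icc (0:ℝ) b, 0 ≤ gg' μs t := by
    intro t ht
    have h1 := hnonneg t ht
    simp only [hmm] at h1
    nlinarith [Real.exp_pos (-V t)]
  have hmono2 : MonotoneOn (gg μs) (Icc (0:ℝ) b) := by
    apply monotoneOn_of_deriv_nonneg (convex_Icc 0 b) ((hggcont μs).mono hsub0)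
    · intro t ht
      rw [interior_Icc] at ht
      exact ((hgg1 μs t (hsub0 (Ioo_subset_Icc_self ht))).differentiableAt).differentiableWithinAt
    · intro t ht
      rw [interior_Icc] at ht
      rw [(hgg1 μs t (hsub0 (Ioo_subset_Icc_self ht))).deriv]
      exact hgg'nn t (Ioo_subset_Icc_self ht)
  have hggnn2 : ∀ t ∈ Icc (0:ℝ) b, 0 ≤ gg μs t := by
    intro t ht
    have := hmono2 ⟨le_rfl, hb.le⟩ ht ht.1
    rwa [hgg0 μs] at this
  have hggpos2 : ∀ t ∈ Ioc (0:ℝ) b, 0 < gg μs t := by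
    intro τ hτ
    rcases lt_or_eq_of_le (hggnn2 τ ⟨hτ.1.le, hτ.2⟩) with h | h
    · exact h
    exfalso
    have hpinch : ∀ x ∈ Ioo (0:ℝ) τ, gg μs x = 0 := by
      intro x hx
      have hxI : x ∈ Icc (0:ℝ) b := ⟨hx.1.le, by linarith [hx.2, hτ.2]⟩
      have h1 := hggnn2 x hxI
      have h2 := hmono2 hxI ⟨hτ.1.le, hτ.2⟩ hx.2.le
      linarith [h.symm ▸ h2]
    have hvanish : ∀ s ∈ Ioo (0:ℝ) τ, mm μs s = 0 := by
      intro s hs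
      have hsI : s ∈ Icc (0:ℝ) b := ⟨hs.1.le, by linarith [hs.2, hτ.2]⟩
      have hDz : HasDerivAt (gg μs) 0 s := by
        refine (hasDerivAt_const s (0:ℝ)).congr_of_eventuallyEq ?_
        filter_upwards [Ioo_mem_nhds hs.1 hs.2] with x hx
        rw [hpinch x hx]
      have hder0 := (hgg1 μs s (hsub0 hsI)).unique hDz
      simp only [hmm]
      rw [hder0]
      ring
    haveI hνne : (𝓝[Ioo (0:ℝ) τ] 0).NeBot := by
      rw [nhdsWithin_Ioo_eq_nhdsGT hτ.1]
      infer_instance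
    have hcontmm : Filter.Tendsto (mm μs) (𝓝[Ioo (0:ℝ) τ] 0) (𝓝 (mm μs 0)) := by
      have h1 : ContinuousWithinAt (mm μs) (Icc (-b) b) 0 := (hmmc μs) 0 h0I
      exact h1.mono (fun x (hx : x ∈ Ioo (0:ℝ) τ) =>
        (⟨by linarith [hx.1.le], by linarith [hx.2, hτ.2]⟩ : x ∈ Icc (-b) b))
    have h2 : Filter.Tendsto (mm μs) (𝓝[Ioo (0:ℝ) τ] 0) (𝓝 0) :=
      tendsto_nhdsWithin_congr (fun s hs => (hvanish s hs).symm) tendsto_const_nhds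
    have h3 := tendsto_nhds_unique hcontmm h2
    rw [hmm0 μs] at h3
    exact (Real.exp_pos (-V 0)).ne' h3
  have hts_pos : 0 < ts := by
    rcases eq_or_lt_of_le htsI.1 with h | h
    · exfalso
      rw [← h] at hts0
      rw [hmm0 μs] at hts0
      exact (Real.exp_pos (-V 0)).ne' hts0
    · exact h
  have htseq : ts = b := by
    by_contra hne
    have htsb : ts < b := lt_of_le_of_ne htsI.2 hne
    have hanti2 : StrictAntiOn (mm μs) (Icc ts b) := by
      apply strictAntiOn_of_deriv_neg (convex_Icc ts b)
        ((hmmc μs).mono (fun x hx => ⟨by linarith [hx.1, hts_pos], hx.2⟩))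
      intro t ht
      rw [interior_Icc] at ht
      have hIoo : t ∈ Ioo (-b) b := ⟨by linarith [ht.1, hts_pos], ht.2⟩
      have hD := hasDerivAt_mom' (hV' t hIoo) (hgg2 μs t (Ioo_subset_Icc_self hIoo))
      have hDm : HasDerivAt (mm μs) (-μs * gg μs t * Real.exp (-V t)) t := by
        simp only [hmm]
        exact hD
      rw [hDm.deriv]
      have hp := hggpos2 t ⟨by linarith [ht.1, hts_pos], ht.2.le⟩
      nlinarith [Real.exp_pos (-V t), mul_pos (mul_pos hμpos hp) (Real.exp_pos (-V t))]
    have h1 := hanti2 ⟨le_rfl, htsb.le⟩ ⟨htsb.le, le_rfl⟩ htsb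
    rw [hts0] at h1
    exact absurd h1 (not_lt.2 (hnonneg b ⟨hb.le, le_rfl⟩))
  refine ⟨μs, hμpos, hμle, ?_⟩
  rw [htseq] at hts0
  simp only [hmm] at hts0
  have hgg'b : gg' μs b = 0 := by
    rcases mul_eq_zero.1 hts0 with h | h
    · exact h
    · exact absurd h (Real.exp_pos _).ne'
  simp only [hgg'] at hgg'b
  rcases div_eq_zero_iff.1 hgg'b with h | h
  · exact h
  · exact absurd h (hg'0 μs)

end Part3

/-- given a basis `f_λ, g_λ` of solutions of `u'' - V'u' = -λu`, the Neumann
eigenvalues are the zeros of `d(λ) = f_λ'(a)g_λ'(b) - f_λ'(b)g_λ'(a)`, so the spectral gap is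
the first positive zero of `d`; and, in the even symmetric case with `g_λ` odd, the spectral
gap is the first positive zero of `λ ↦ g_λ'(b)`. -/
theorem stmt15 (a b : ℝ) (hab : a < b) (V V' : ℝ → ℝ)
    (hVc : ContinuousOn V (Set.Icc a b))
    (hV' : ∀ t ∈ Set.Ioo a b, HasDerivAt V (V' t) t)
    (f g f' g' : ℝ → ℝ → ℝ)
    (hf : ∀ lam, IsSol V' a b lam (f lam) (f' lam))
    (hg : ∀ lam, IsSol V' a b lam (g lam) (g' lam))
    (hindep : ∀ lam A B : ℝ, (∀ t ∈ Set.Icc a b, A * f lam t + B * g lam t = 0) →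
      A = 0 ∧ B = 0)
    (hbasis : ∀ lam, ∀ u u' : ℝ → ℝ, IsSol V' a b lam u u' →
      ∃ A B : ℝ, ∀ t ∈ Set.Icc a b, u t = A * f lam t + B * g lam t)
    (d : ℝ → ℝ) (hd : ∀ lam, d lam = f' lam a * g' lam b - f' lam b * g' lam a) :
    (∀ lam, 0 < lam → (IsNeumannEig V' a b lam ↔ d lam = 0)) ∧
    sInf {lam | 0 < lam ∧ IsNeumannEig V' a b lam} = sInf {lam | 0 < lam ∧ d lam = 0} ∧
    ((∀ t, V (-t) = V t) → a = -b → (∀ lam t, g lam (-t) = - g lam t) →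
      sInf {lam | 0 < lam ∧ IsNeumannEig V' a b lam}
        = sInf {lam | 0 < lam ∧ g' lam b = 0}) := by
  constructor
  · intro lam _
    rw [hd lam]
    exact part1_iff hab (hf lam) (hg lam) (hindep lam) (hbasis lam)
  constructor
  · apply congrArg sInf
    ext lam
    simp only [Set.mem_setOf_eq]
    constructor
    · rintro ⟨h1, h2⟩
      refine ⟨h1, ?_⟩
      rw [hd lam]
      exact (part1_iff hab (hf lam) (hg lam) (hindep lam) (hbasis lam)).1 h2
    · rintro ⟨h1, h2⟩
      rw [hd lam] at h2
      exact ⟨h1, (part1_iff hab (hf lam) (hg lam) (hindep lam) (hbasis lam)).2 h2⟩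
  · intro hVe hab' hgodd
    subst hab'
    have hb : 0 < b := by linarith
    obtain ⟨K, hK⟩ : ∃ K, ∀ t ∈ Set.Icc (-b) b, |V t| ≤ K := by
      obtain ⟨K, hK⟩ := (isCompact_Icc (a := -b) (b := b)).exists_bound_of_continuousOn hVc
      exact ⟨K, fun t ht => by simpa [Real.norm_eq_abs] using hK t ht⟩
    have hg'sym : ∀ lam, g' lam (-b) = g' lam b := by
      intro lam
      have h1 : HasDerivAt (fun s => g lam (-s)) (g' lam (-b) * -1) b :=
        ((hg lam).1 (-b) ⟨le_rfl, by linarith⟩).comp b ((hasDerivAt_id b).neg)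
      have h2 : (fun s => g lam (-s)) = fun s => -(g lam s) := funext (hgodd lam)
      rw [h2] at h1
      have h3 : HasDerivAt (fun s => -(g lam s)) (-(g' lam b)) b :=
        ((hg lam).1 b ⟨by linarith, le_rfl⟩).neg
      have := h1.unique h3
      linarith
    have hgne : ∀ lam, ¬ (∀ t ∈ Set.Icc (-b) b, g lam t = 0) := by
      intro lam hzero
      have := hindep lam 0 1 (fun t ht => by rw [hzero t ht]; ring)
      exact one_ne_zero this.2
    have hGN : {lam | 0 < lam ∧ g' lam b = 0} ⊆ {lam | 0 < lam ∧ IsNeumannEig V' (-b) b lam} := by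
      rintro lam ⟨hpos, hgb⟩
      refine ⟨hpos, g lam, g' lam, hg lam, ?_, ?_, hgb⟩
      · by_contra hz
        push_neg at hz
        exact hgne lam hz
      · rw [hg'sym lam]; exact hgb
    have hNle : ∀ lam ∈ {lam | 0 < lam ∧ IsNeumannEig V' (-b) b lam},
        ∃ μ ∈ {lam | 0 < lam ∧ g' lam b = 0}, μ ≤ lam := by
      rintro lam ⟨hpos, u, u', hSol, hnz, hua, hub⟩
      by_cases hodd : ∃ x ∈ Set.Icc (-b) b, u x ≠ u (-x)
      · refine ⟨lam, ⟨hpos, ?_⟩, le_rfl⟩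
        exact odd_case hb hVe hVc hV' hK hSol.1 hSol.2 hua hub
          (hg lam).1 (hg lam).2 (hgodd lam) (hgne lam) hodd
      · push_neg at hodd
        have hueven : ∀ t ∈ Set.Icc (-b) b, u (-t) = u t := fun t ht => (hodd t ht).symm
        obtain ⟨μ, hμpos, hμle, hμb⟩ := even_case hb hVe hVc hV' hK hpos hSol.1 hSol.2
          hua hub hueven hnz (fun μ => (hg μ).1) (fun μ => (hg μ).2)
          (fun μ => hgodd μ) (fun μ => hgne μ)
        exact ⟨μ, ⟨hμpos, hμb⟩, hμle⟩
    rcases eq_or_ne {lam | 0 < lam ∧ IsNeumannEig V' (-b) b lam} ∅ with hNe | hNne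
    · have hGe : {lam | 0 < lam ∧ g' lam b = 0} = ∅ := by
        rw [← Set.subset_empty_iff]
        exact hNe ▸ hGN
      rw [hNe, hGe]
    · have hNne' : {lam | 0 < lam ∧ IsNeumannEig V' (-b) b lam}.Nonempty :=
        Set.nonempty_iff_ne_empty.2 hNne
      have hGne : {lam | 0 < lam ∧ g' lam b = 0}.Nonempty := by
        obtain ⟨lam, hlamN⟩ := hNne'
        obtain ⟨μ, hμG, _⟩ := hNle lam hlamN
        exact ⟨μ, hμG⟩
      have hNbdd : BddBelow {lam | 0 < lam ∧ IsNeumannEig V' (-b) b lam} :=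
        ⟨0, fun x hx => hx.1.le⟩
      have hGbdd : BddBelow {lam | 0 < lam ∧ g' lam b = 0} :=
        ⟨0, fun x hx => hx.1.le⟩
      apply le_antisymm
      · exact csInf_le_csInf hNbdd hGne hGN
      · apply le_csInf hNne'
        intro lam hlam
        obtain ⟨μ, hμG, hμle⟩ := hNle lam hlam
        exact (csInf_le hGbdd hμG).trans hμle
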